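/- Let r ≥ 0, let (x_n) be a sequence in an S-metric space (X,S), and let (x_{n_p}) be a subsequence of (x_n), given by a strictly increasing sequence (n_p) of indices, such that the set {n_1, n_2, ...} has natural density 1. Then st-LIM^r x_n ⊆ st-LIM^r x_{n_p}. -/

import Mathlib

open Filter

open scoped Classical in
/-- Natural density: `A ⊆ ℕ` has density `d` if `|{k ∈ A : k < n}|/n → d`. -/
def HasDensity (A : Set ℕ) (d : ℝ) : Prop :=
  Filter.Tendsto
    (fun n : ℕ => (((Finset.range n).filter (fun k => k ∈ A)).card : ℝ) / n)
    Filter.atTop (nhds d)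

/-- `S` is an S-metric on `X`. -/
structure IsSMetric {X : Type*} (S : X → X → X → ℝ) : Prop where
  nonneg : ∀ x y z, 0 ≤ S x y z
  eq_zero_iff : ∀ x y z, S x y z = 0 ↔ x = y ∧ y = z
  triangle : ∀ x y z a, S x y z ≤ S x x a + S y y a + S z z a

/-- Ordinary convergence of a sequence in an S-metric space. -/
def SConvergesTo {X : Type*} (S : X → X → X → ℝ) (x : ℕ → X) (l : X) : Prop :=
  ∀ ε : ℝ, 0 < ε → ∃ N : ℕ, ∀ n ≥ N, S (x n) (x n) l < ε

/-- Statistical convergence of a sequence in an S-metric space. -/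
def SStatConvergesTo {X : Type*} (S : X → X → X → ℝ) (x : ℕ → X) (l : X) : Prop :=
  ∀ ε : ℝ, 0 < ε → HasDensity {n : ℕ | ε ≤ S (x n) (x n) l} 0

/-- Cauchy sequence in an S-metric space. -/
def SCauchy {X : Type*} (S : X → X → X → ℝ) (x : ℕ → X) : Prop :=
  ∀ ε : ℝ, 0 < ε → ∃ k : ℕ, ∀ n ≥ k, ∀ m ≥ k, S (x n) (x n) (x m) < ε

/-- Statistically Cauchy sequence in an S-metric space. -/
def SStatCauchy {X : Type*} (S : X → X → X → ℝ) (x : ℕ → X) : Prop :=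
  ∀ ε : ℝ, 0 < ε → ∃ N : ℕ, HasDensity {n : ℕ | ε ≤ S (x n) (x n) (x N)} 0

/-- Statistically bounded sequence in an S-metric space. -/
def SStatBounded {X : Type*} (S : X → X → X → ℝ) (x : ℕ → X) : Prop :=
  ∀ u : X, ∃ B : ℝ, 0 < B ∧ HasDensity {n : ℕ | B ≤ S (x n) (x n) u} 0

/-- Rough convergence with roughness degree `r`. -/
def SRoughConvergesTo {X : Type*} (S : X → X → X → ℝ) (r : ℝ) (x : ℕ → X) (p : X) : Prop :=
  ∀ ε : ℝ, 0 < ε → ∃ k : ℕ, ∀ n ≥ k, S (x n) (x n) p < r + ε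

/-- Rough statistical convergence with roughness degree `r`. -/
def SRoughStatConvergesTo {X : Type*} (S : X → X → X → ℝ) (r : ℝ) (x : ℕ → X) (p : X) : Prop :=
  ∀ ε : ℝ, 0 < ε → HasDensity {n : ℕ | r + ε ≤ S (x n) (x n) p} 0

/-- The rough statistical limit set `st-LIM^r x_n`. -/
def stLIM {X : Type*} (S : X → X → X → ℝ) (r : ℝ) (x : ℕ → X) : Set X :=
  {p : X | SRoughStatConvergesTo S r x p}

/-- The topology on `X` generated by the open balls of the S-metric. -/
def sBallTopology {X : Type*} (S : X → X → X → ℝ) : TopologicalSpace X :=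
  TopologicalSpace.generateFrom
    {B : Set X | ∃ c : X, ∃ ε : ℝ, 0 < ε ∧ B = {y : X | S y y c < ε}}

theorem stmt_17 {X : Type*} [Nonempty X] (S : X → X → X → ℝ) (hS : IsSMetric S)
    (r : ℝ) (hr : 0 ≤ r) (x : ℕ → X) (n : ℕ → ℕ) (hn : StrictMono n)
    (hdens : HasDensity (Set.range n) 1) :
    stLIM S r x ⊆ stLIM S r (fun p => x (n p)) := by
  classical
  intro p hp ε hε
  have hA := hp ε hε
  set A : Set ℕ := {k : ℕ | r + ε ≤ S (x k) (x k) p} with hAdef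
  have hmono : Filter.Tendsto n Filter.atTop Filter.atTop := hn.tendsto_atTop
  have hcard : ∀ m, (((Finset.range (n m)).filter (fun k => k ∈ Set.range n)).card) = m := by
    intro m
    have heq : (Finset.range (n m)).filter (fun k => k ∈ Set.range n)
        = (Finset.range m).image n := by
      ext k
      simp only [Finset.mem_filter, Finset.mem_range, Finset.mem_image, Set.mem_range]
      constructor
      · rintro ⟨hk, q, rfl⟩
        exact ⟨q, hn.lt_iff_lt.mp hk, rfl⟩
      · rintro ⟨q, hq, rfl⟩
        exact ⟨hn hq, q, rfl⟩
    rw [heq, Finset.card_image_of_injective _ hn.injective, Finset.card_range]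
  have h1 := hdens.comp hmono
  have h2 : Filter.Tendsto (fun m : ℕ => (m : ℝ) / (n m)) Filter.atTop (nhds 1) := by
    have : (fun m : ℕ => (m : ℝ) / (n m)) = (fun N : ℕ =>
        (((Finset.range N).filter (fun k => k ∈ Set.range n)).card : ℝ) / N) ∘ n := by
      funext m
      simp only [Function.comp_apply, hcard]
    rw [this]; exact h1
  have h3 : Filter.Tendsto (fun m : ℕ => ((n m : ℝ)) / m) Filter.atTop (nhds 1) := by
    have := h2.inv₀ one_ne_zero
    simpa [inv_div] using this
  have hfA := hA.comp hmono
  have hprod : Filter.Tendsto (fun m : ℕ =>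
      ((((Finset.range (n m)).filter (fun k => k ∈ A)).card : ℝ) / (n m)) * ((n m : ℝ) / m))
      Filter.atTop (nhds 0) := by
    simpa using hfA.mul h3
  have hle : ∀ m : ℕ, 1 ≤ m →
      (((Finset.range m).filter (fun q => n q ∈ A)).card : ℝ) / m
        ≤ ((((Finset.range (n m)).filter (fun k => k ∈ A)).card : ℝ) / (n m)) * ((n m : ℝ) / m) := by
    intro m hm
    have hnm : 0 < n m := lt_of_lt_of_le hm (hn.le_apply)
    have hnm' : (n m : ℝ) ≠ 0 := by positivity
    have heq : ((((Finset.range (n m)).filter (fun k => k ∈ A)).card : ℝ) / (n m)) * ((n m : ℝ) / m)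
        = (((Finset.range (n m)).filter (fun k => k ∈ A)).card : ℝ) / m := by
      field_simp
    rw [heq]
    have hmR : (0:ℝ) < m := by exact_mod_cast hm
    refine (div_le_div_iff_of_pos_right hmR).mpr ?_
    exact_mod_cast Finset.card_le_card_of_injOn (fun q => n q)
        (by
          intro q hq
          simp only [Finset.coe_filter, Finset.mem_coe, Set.mem_setOf_eq, Finset.mem_filter, Finset.mem_range] at hq ⊢
          exact ⟨hn hq.1, hq.2⟩)
        (fun a _ b _ h => hn.injective h)
  refine tendsto_of_tendsto_of_tendsto_of_le_of_le' tendsto_const_nhds hprod ?_ ?_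
  · filter_upwards with m; positivity
  · filter_upwards [Filter.eventually_ge_atTop 1] with m hm using hle m hm
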